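/- Let k ≥ 1 and let M₁, …, Mₖ and N₁, …, Nₖ be positive integers satisfying: M_j ≥ 2·M_{j+1} for all 1 ≤ j ≤ k-1, Mₖ ≥ 2, and N₁ ≥ M₁ + 1. Define S := (M₁ - 1)(N₁ - 1) + Σ_{j=2}^{k} (M_j - 1)·N_j. Then S ≥ (2^k - 1)·2^k, and if moreover k ≥ 2 then the stronger strict inequality S > (2^k - 1)·2^k holds. In particular, if k = 2 then S ≥ 13, and if k = 3 then S ≥ 57. -/

import Mathlib

/-- Bound on (twice) the delta-invariant of a cusp with `k` Newton pairs.
Given positive integers `M₁, …, M_k`, `N₁, …, N_k` with `M_j ≥ 2·M_{j+1}` for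
`1 ≤ j ≤ k - 1`, `M_k ≥ 2` and `N₁ ≥ M₁ + 1`, the quantity
`S = (M₁ - 1)(N₁ - 1) + ∑_{j=2}^k (M_j - 1)·N_j` satisfies `S ≥ (2^k - 1)·2^k`,
the inequality being strict when `k ≥ 2`; in particular `S ≥ 13` when `k = 2`
and `S ≥ 57` when `k = 3`. -/
theorem newton_pairs_delta_bound (k : ℕ) (hk : 1 ≤ k) (M N : ℕ → ℤ)
    (hMpos : ∀ j, 1 ≤ j → j ≤ k → 0 < M j)
    (hNpos : ∀ j, 1 ≤ j → j ≤ k → 0 < N j)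
    (hMstep : ∀ j, 1 ≤ j → j ≤ k - 1 → 2 * M (j + 1) ≤ M j)
    (hMk : 2 ≤ M k)
    (hN1 : M 1 + 1 ≤ N 1) :
    (2 ^ k - 1) * 2 ^ k ≤
        (M 1 - 1) * (N 1 - 1) + ∑ j ∈ Finset.Icc 2 k, (M j - 1) * N j ∧
      (2 ≤ k → (2 ^ k - 1) * 2 ^ k <
        (M 1 - 1) * (N 1 - 1) + ∑ j ∈ Finset.Icc 2 k, (M j - 1) * N j) ∧
      (k = 2 → (13 : ℤ) ≤
        (M 1 - 1) * (N 1 - 1) + ∑ j ∈ Finset.Icc 2 k, (M j - 1) * N j) ∧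
      (k = 3 → (57 : ℤ) ≤
        (M 1 - 1) * (N 1 - 1) + ∑ j ∈ Finset.Icc 2 k, (M j - 1) * N j) := by
  -- key: M (k - d) ≥ 2 ^ (d + 1) for d ≤ k - 1
  have key : ∀ d, d ≤ k - 1 → (2 : ℤ) ^ (d + 1) ≤ M (k - d) := by
    intro d
    induction d with
    | zero => intro _; simpa using hMk
    | succ n ih =>
      intro hd
      have hn := ih (by omega)
      have h1 : 1 ≤ k - (n + 1) := by omega
      have hstep := hMstep (k - (n + 1)) h1 (by omega)
      have hkn : k - (n + 1) + 1 = k - n := by omega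
      rw [hkn] at hstep
      calc (2 : ℤ) ^ (n + 1 + 1) = 2 * 2 ^ (n + 1) := by ring
        _ ≤ 2 * M (k - n) := by linarith
        _ ≤ M (k - (n + 1)) := hstep
  have hM1 : (2 : ℤ) ^ k ≤ M 1 := by
    have := key (k - 1) le_rfl
    have h1 : k - (k - 1) = 1 := by omega
    have h2 : k - 1 + 1 = k := by omega
    rwa [h1, h2] at this
  have hpow : (0 : ℤ) < 2 ^ k := by positivity
  have hsum0 : (0 : ℤ) ≤ ∑ j ∈ Finset.Icc 2 k, (M j - 1) * N j := by
    apply Finset.sum_nonneg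
    intro j hj
    simp only [Finset.mem_Icc] at hj
    have hM := hMpos j (by omega) hj.2
    have hN := hNpos j (by omega) hj.2
    nlinarith
  have hmain : (2 ^ k - 1) * 2 ^ k ≤ (M 1 - 1) * (N 1 - 1) := by
    have h1 : (2 : ℤ) ^ k - 1 ≤ M 1 - 1 := by linarith
    have h2 : (2 : ℤ) ^ k ≤ N 1 - 1 := by linarith
    have h3 : (0 : ℤ) ≤ 2 ^ k - 1 := by linarith
    nlinarith
  have hbase : (2 ^ k - 1) * 2 ^ k ≤
      (M 1 - 1) * (N 1 - 1) + ∑ j ∈ Finset.Icc 2 k, (M j - 1) * N j := by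
    linarith
  have hstrict : 2 ≤ k → (2 ^ k - 1) * 2 ^ k <
      (M 1 - 1) * (N 1 - 1) + ∑ j ∈ Finset.Icc 2 k, (M j - 1) * N j := by
    intro hk2
    have hM2 : (2 : ℤ) ≤ M 2 := by
      have := key (k - 2) (by omega)
      have h1 : k - (k - 2) = 2 := by omega
      rw [h1] at this
      calc (2 : ℤ) ≤ 2 ^ (k - 2 + 1) := by
            have : (2 : ℤ) ^ 1 ≤ 2 ^ (k - 2 + 1) :=
              pow_le_pow_right₀ (by norm_num) (by omega)
            simpa using this
        _ ≤ M 2 := this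
    have hN2 : (1 : ℤ) ≤ N 2 := hNpos 2 (by omega) hk2
    have hterm : (1 : ℤ) ≤ (M 2 - 1) * N 2 := by nlinarith
    have hsum1 : (1 : ℤ) ≤ ∑ j ∈ Finset.Icc 2 k, (M j - 1) * N j := by
      have hmem : 2 ∈ Finset.Icc 2 k := Finset.mem_Icc.mpr ⟨le_rfl, hk2⟩
      have := Finset.single_le_sum (f := fun j => (M j - 1) * N j)
        (fun j hj => by
          show (0 : ℤ) ≤ (M j - 1) * N j
          simp only [Finset.mem_Icc] at hj
          have hM := hMpos j (by omega) hj.2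
          have hN := hNpos j (by omega) hj.2
          nlinarith) hmem
      linarith
    linarith
  refine ⟨hbase, hstrict, ?_, ?_⟩
  · intro h2; subst h2
    have := hstrict le_rfl
    norm_num at this ⊢
    linarith
  · intro h3; subst h3
    have := hstrict (by norm_num)
    norm_num at this ⊢
    linarith
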